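/- Let (Ω, P) be a probability space with X : Ω → 𝒳, T : Ω → {0,1}, Y : Ω → ℝ bounded. Suppose μ̃ : 𝒳 → ℝ is bounded measurable and h : 𝒳 → ℝ is measurable with |E[(Y − μ̃(X)) · h(X) · 𝟙[T=1]]| ≤ α (a multi-accuracy condition with test function h·𝟙[T=1]). If h(x) = 1/e(x) where e(x) = P(T=1 | X=x) and E[Y(1) | X] = E[Y | X, T=1] a.s. (unconfoundedness with consistency), then |E[μ̃(X)] − E[Y(1)]| ≤ α, where Y(1) denotes the potential outcome under treatment. -/
import Mathlib

open MeasureTheory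

private lemma bdd_integrable {Ω : Type*} [MeasurableSpace Ω] (P : Measure Ω)
    [IsFiniteMeasure P] {f : Ω → ℝ} (hf : Measurable f) (C : ℝ)
    (hC : ∀ ω, |f ω| ≤ C) : Integrable f P :=
  (integrable_const C).mono' hf.aestronglyMeasurable
    (Filter.Eventually.of_forall fun ω => by simpa using hC ω)

theorem multiaccuracy_ipw_bias_bound
    {Ω 𝒳 : Type*} [MeasurableSpace Ω] [MeasurableSpace 𝒳]
    (P : Measure Ω) [IsProbabilityMeasure P]
    (X : Ω → 𝒳) (T Y Y1 : Ω → ℝ) (e μt h : 𝒳 → ℝ) (α : ℝ)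
    (hX : Measurable X) (hT : Measurable T) (hY : Measurable Y) (hY1 : Measurable Y1)
    (he : Measurable e) (hμt : Measurable μt) (hh : Measurable h)
    (hTbin : ∀ ω, T ω = 0 ∨ T ω = 1)
    (B : ℝ) (hYb : ∀ ω, |Y ω| ≤ B) (hY1b : ∀ ω, |Y1 ω| ≤ B)
    (hμtb : ∃ C, ∀ x, |μt x| ≤ C)
    (ν : ℝ) (hν : 0 < ν) (heb : ∀ x, ν ≤ e x ∧ e x ≤ 1 - ν)
    -- consistency: `Y·𝟙[T=1] = Y(1)·𝟙[T=1]`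
    (hcons : ∀ ω, Y ω * T ω = Y1 ω * T ω)
    -- `e(x) = P(T=1 | X=x)` a.s.
    (hCE_T : ∀ g : 𝒳 → ℝ, Measurable g → (∃ C, ∀ x, |g x| ≤ C) →
      ∫ ω, g (X ω) * T ω ∂P = ∫ ω, g (X ω) * e (X ω) ∂P)
    -- ignorability: `E[Y(1)·𝟙[T=1] | X] = e(X)·E[Y(1) | X]` a.s.,
    -- i.e. `E[Y(1) | X, T] = E[Y(1) | X]` a.s. combined with the propensity identity
    (hUnconf : ∀ g : 𝒳 → ℝ, Measurable g → (∃ C, ∀ x, |g x| ≤ C) →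
      ∫ ω, g (X ω) * (T ω * Y1 ω) ∂P = ∫ ω, g (X ω) * (e (X ω) * Y1 ω) ∂P)
    -- the test function is the inverse propensity score
    (hhe : ∀ x, h x = 1 / e x)
    -- multi-accuracy with test function `h·𝟙[T=1]`
    (hMA : |∫ ω, (Y ω - μt (X ω)) * h (X ω) * T ω ∂P| ≤ α) :
    |(∫ ω, μt (X ω) ∂P) - ∫ ω, Y1 ω ∂P| ≤ α := by
  obtain ⟨C, hC⟩ := hμtb
  have hepos : ∀ x, 0 < e x := fun x => lt_of_lt_of_le hν (heb x).1
  have hhb : ∀ x, |h x| ≤ 1 / ν := by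
    intro x
    rw [hhe x, abs_of_nonneg (div_nonneg zero_le_one (hepos x).le)]
    exact one_div_le_one_div_of_le hν (heb x).1
  have hTb : ∀ ω, |T ω| ≤ 1 := by
    intro ω; rcases hTbin ω with h' | h' <;> simp [h']
  -- integrability facts
  have int1 : Integrable (fun ω => h (X ω) * (T ω * Y1 ω)) P := by
    refine bdd_integrable P (((hh.comp hX)).mul (hT.mul hY1)) ((1/ν) * (1 * |B|)) ?_
    intro ω
    rw [abs_mul, abs_mul]
    exact mul_le_mul (hhb _) (mul_le_mul (hTb ω) ((hY1b ω).trans (le_abs_self B))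
      (abs_nonneg _) zero_le_one) (by positivity) (by positivity)
  have int2 : Integrable (fun ω => (μt (X ω) * h (X ω)) * T ω) P := by
    refine bdd_integrable P (((hμt.comp hX).mul (hh.comp hX)).mul hT) ((|C| * (1/ν)) * 1) ?_
    intro ω
    rw [abs_mul, abs_mul]
    exact mul_le_mul (mul_le_mul ((hC _).trans (le_abs_self C)) (hhb _)
      (abs_nonneg _) (abs_nonneg _)) (hTb ω) (abs_nonneg _) (by positivity)
  -- rewrite the MA integrand
  have key : ∫ ω, (Y ω - μt (X ω)) * h (X ω) * T ω ∂P
      = (∫ ω, h (X ω) * (T ω * Y1 ω) ∂P) - ∫ ω, (μt (X ω) * h (X ω)) * T ω ∂P := by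
    rw [← integral_sub int1 int2]
    refine integral_congr_ae (Filter.Eventually.of_forall fun ω => ?_)
    have h1 : Y ω * T ω = Y1 ω * T ω := hcons ω
    dsimp only
    linear_combination h (X ω) * h1
  have e1 : ∫ ω, h (X ω) * (T ω * Y1 ω) ∂P = ∫ ω, Y1 ω ∂P := by
    rw [hUnconf h hh ⟨1/ν, hhb⟩]
    refine integral_congr_ae (Filter.Eventually.of_forall fun ω => ?_)
    dsimp only
    rw [hhe]
    field_simp [(hepos (X ω)).ne']
  have e2 : ∫ ω, (μt (X ω) * h (X ω)) * T ω ∂P = ∫ ω, μt (X ω) ∂P := by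
    have := hCE_T (fun x => μt x * h x) (hμt.mul hh)
      ⟨|C| * (1/ν), fun x => by
        rw [abs_mul]
        exact mul_le_mul ((hC x).trans (le_abs_self C)) (hhb x) (abs_nonneg _) (abs_nonneg _)⟩
    rw [this]
    refine integral_congr_ae (Filter.Eventually.of_forall fun ω => ?_)
    dsimp only
    rw [hhe]
    field_simp [(hepos (X ω)).ne']
  rw [key, e1, e2] at hMA
  rw [abs_sub_comm] at hMA
  exact hMA
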